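/- There exists a constant C > 0 such that for every integer n ≥ 4: n³/(3(n−1)²) + (n³/3) · ∑_{k=1}^{⌊n/2⌋−1} (n−k) / ((k+1)·(n−k−1)²·(n−2k)) ≤ n·ln n + C·n. -/

import Mathlib

open Finset

/-- basic log step: `1/(x+1) ≤ log (x+1) - log x` for `x ≥ 1`. -/
lemma htb_log_step {x : ℝ} (hx : 1 ≤ x) : 1 / (x + 1) ≤ Real.log (x + 1) - Real.log x := by
  have hx0 : 0 < x := by linarith
  have hx1 : 0 < x + 1 := by linarith
  have h := Real.log_le_sub_one_of_pos (show 0 < x / (x + 1) by positivity)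
  rw [Real.log_div (by linarith) (by linarith)] at h
  have h2 : x / (x + 1) - 1 = -(1 / (x + 1)) := by field_simp; ring
  rw [h2] at h
  linarith

/-- two-step log bound: `1/y ≤ (log y - log (y-2))/2` for `y ≥ 3`. -/
lemma htb_log_step2 {y : ℝ} (hy : 3 ≤ y) : 1 / y ≤ (Real.log y - Real.log (y - 2)) / 2 := by
  have h1 : 1 / y ≤ Real.log y - Real.log (y - 1) := by
    have := htb_log_step (x := y - 1) (by linarith)
    have e : y - 1 + 1 = y := by ring
    rw [e] at this
    exact this
  have h2 : 1 / y ≤ Real.log (y - 1) - Real.log (y - 2) := by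
    have := htb_log_step (x := y - 2) (by linarith)
    have e : y - 2 + 1 = y - 1 := by ring
    rw [e] at this
    have h3 : 1 / y ≤ 1 / (y - 1) := by
      apply one_div_le_one_div_of_le <;> linarith
    linarith
  linarith

/-- harmonic-type bound for `∑ 1/(k+1)`. -/
lemma htb_sumA (M : ℕ) :
    ∑ k ∈ Icc 1 M, (1 : ℝ) / ((k : ℝ) + 1) ≤ Real.log ((M : ℝ) + 1) := by
  induction M with
  | zero => simp
  | succ M ih =>
    rw [Finset.sum_Icc_succ_top (by omega : 1 ≤ M + 1)]
    have hstep : (1 : ℝ) / (((M + 1 : ℕ) : ℝ) + 1)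
        ≤ Real.log (((M : ℝ) + 1) + 1) - Real.log ((M : ℝ) + 1) := by
      have hM0 : (0:ℝ) ≤ (M : ℝ) := Nat.cast_nonneg M
      have := htb_log_step (x := (M : ℝ) + 1) (by linarith)
      push_cast
      convert this using 2 <;> push_cast <;> ring
    have e : (((M + 1 : ℕ) : ℝ) + 1) = ((M : ℝ) + 1) + 1 := by push_cast; ring
    rw [e]
    rw [e] at hstep
    linarith

/-- telescoping bound for `∑ 1/(n - 2k)`. -/
lemma htb_sumC (n : ℕ) : ∀ M : ℕ, 2 * M + 3 ≤ n →
    ∑ k ∈ Icc 1 M, (1 : ℝ) / ((n : ℝ) - 2 * k)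
      ≤ (Real.log ((n : ℝ) - 2) - Real.log ((n : ℝ) - 2 * M - 2)) / 2 := by
  intro M
  induction M with
  | zero => intro _; simp
  | succ M ih =>
    intro hM
    have hM' : 2 * M + 3 ≤ n := by omega
    have h5 : 2 * M + 5 ≤ n := by omega
    have hy : (3 : ℝ) ≤ (n : ℝ) - 2 * M - 2 := by
      have : ((2 * M + 5 : ℕ) : ℝ) ≤ (n : ℝ) := by exact_mod_cast Nat.cast_le.mpr h5
      push_cast at this
      linarith
    rw [Finset.sum_Icc_succ_top (by omega : 1 ≤ M + 1)]
    have hstep : (1 : ℝ) / ((n : ℝ) - 2 * ((M + 1 : ℕ) : ℝ))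
        ≤ (Real.log ((n : ℝ) - 2 * M - 2) - Real.log ((n : ℝ) - 2 * M - 4)) / 2 := by
      have h := htb_log_step2 (y := (n : ℝ) - 2 * M - 2) hy
      have e1 : (n : ℝ) - 2 * ((M + 1 : ℕ) : ℝ) = (n : ℝ) - 2 * M - 2 := by push_cast; ring
      have e2 : (n : ℝ) - 2 * M - 2 - 2 = (n : ℝ) - 2 * M - 4 := by ring
      rw [e1]
      rw [e2] at h
      exact h
    have ih' := ih hM'
    have e3 : (n : ℝ) - 2 * ((M + 1 : ℕ) : ℝ) - 2 = (n : ℝ) - 2 * M - 4 := by push_cast; ring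
    rw [e3]
    linarith

/-- abstract pointwise bound. -/
lemma htb_pointwise (a b c : ℝ) (ha : 2 ≤ a) (hc : 2 ≤ c) (hab : a ≤ b)
    (h2ac : 2 * a + c = (a + b) + 2) :
    (b + 1) / (a * b ^ 2 * c)
      ≤ (4 / (a + b) ^ 2 + 8 / (a + b) ^ 3) * (1 / c)
        + (1 / (a + b) ^ 2 + 4 / (a + b) ^ 3) * (1 / a) := by
  have ha0 : 0 < a := by linarith
  have hb0 : 0 < b := by linarith
  have hc0 : 0 < c := by linarith
  have hN0 : 0 < a + b := by linarith
  have hid : (b + 1) / (a * b ^ 2 * c)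
      = 1 / ((a + b) * a * c) + 1 / ((a + b) * b * c) + 1 / (a * b ^ 2 * c) := by
    field_simp
    ring
  have h2 : 1 / ((a + b) * a * c) ≤ 2 / ((a + b) ^ 2 * c) + 1 / ((a + b) ^ 2 * a) := by
    have e : 2 / ((a + b) ^ 2 * c) + 1 / ((a + b) ^ 2 * a)
        = (2 * a + c) / ((a + b) ^ 2 * a * c) := by field_simp
    have e2 : 1 / ((a + b) * a * c) = (a + b) / ((a + b) ^ 2 * a * c) := by
      field_simp
    rw [e, e2]
    apply div_le_div_of_nonneg_right ?_ (by positivity) |>.trans_eq rfl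
    · linarith
  have h3 : 1 / ((a + b) * b * c) ≤ 2 / ((a + b) ^ 2 * c) := by
    have e : 2 / ((a + b) ^ 2 * c) = (2 * b) / ((a + b) ^ 2 * b * c) := by
      field_simp
    have e2 : 1 / ((a + b) * b * c) = (a + b) / ((a + b) ^ 2 * b * c) := by
      field_simp
    rw [e, e2]
    apply div_le_div_of_nonneg_right ?_ (by positivity) |>.trans_eq rfl
    · linarith
  have h4 : 1 / (a * b ^ 2 * c) ≤ 8 / ((a + b) ^ 3 * c) + 4 / ((a + b) ^ 3 * a) := by
    have step1 : 1 / (a * b ^ 2 * c) ≤ 4 / ((a + b) ^ 2 * a * c) := by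
      rw [div_le_div_iff₀ (by positivity) (by positivity)]
      have h4b : (a + b) ^ 2 ≤ 4 * b ^ 2 := by nlinarith
      nlinarith [mul_le_mul_of_nonneg_right h4b (mul_nonneg ha0.le hc0.le)]
    have step2 : 4 / ((a + b) ^ 2 * a * c) = (4 * (a + b)) / ((a + b) ^ 3 * a * c) := by
      field_simp
    have step3 : (4 * (a + b)) / ((a + b) ^ 3 * a * c)
        ≤ (4 * ((a + b) + 2)) / ((a + b) ^ 3 * a * c) := by
      apply div_le_div_of_nonneg_right ?_ (by positivity) |>.trans_eq rfl
      · linarith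
    have step4 : (4 * ((a + b) + 2)) / ((a + b) ^ 3 * a * c)
        = 8 / ((a + b) ^ 3 * c) + 4 / ((a + b) ^ 3 * a) := by
      rw [← h2ac]; field_simp; ring
    calc 1 / (a * b ^ 2 * c) ≤ 4 / ((a + b) ^ 2 * a * c) := step1
      _ = (4 * (a + b)) / ((a + b) ^ 3 * a * c) := step2
      _ ≤ (4 * ((a + b) + 2)) / ((a + b) ^ 3 * a * c) := step3
      _ = 8 / ((a + b) ^ 3 * c) + 4 / ((a + b) ^ 3 * a) := step4
  have hrhs : (4 / (a + b) ^ 2 + 8 / (a + b) ^ 3) * (1 / c)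
        + (1 / (a + b) ^ 2 + 4 / (a + b) ^ 3) * (1 / a)
      = (2 / ((a + b) ^ 2 * c) + 1 / ((a + b) ^ 2 * a)) + 2 / ((a + b) ^ 2 * c)
        + (8 / ((a + b) ^ 3 * c) + 4 / ((a + b) ^ 3 * a)) := by
    field_simp
    ring
  rw [hid, hrhs]
  -- careful: h2 used (2a+c ≥ a+b) which follows from h2ac
  linarith

theorem hitting_time_bound_explicit :
    ∃ C : ℝ, C > 0 ∧
      ∀ n : ℕ, 4 ≤ n →
        (n : ℝ) ^ 3 / (3 * ((n : ℝ) - 1) ^ 2)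
          + ((n : ℝ) ^ 3 / 3) *
            ∑ k ∈ Finset.Icc 1 (n / 2 - 1),
              ((n : ℝ) - k) / (((k : ℝ) + 1) * ((n : ℝ) - k - 1) ^ 2 * ((n : ℝ) - 2 * k))
        ≤ n * Real.log n + C * n := by
  refine ⟨8, by norm_num, fun n hn => ?_⟩
  obtain ⟨M, hM⟩ : ∃ M, n / 2 - 1 = M + 1 := ⟨n / 2 - 2, by omega⟩
  rw [hM]
  have hm2 : 2 * (M + 1) + 2 ≤ n := by omega
  have hm3 : (M + 1) + 1 ≤ n := by omega
  have hn4 : (4 : ℝ) ≤ (n : ℝ) := by exact_mod_cast hn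
  have hnpos : (0 : ℝ) < n := by linarith
  set L := Real.log (n : ℝ) with hL
  have hL0 : 0 ≤ L := Real.log_nonneg (by linarith)
  have hLn : L ≤ (n : ℝ) := by
    have := Real.log_le_sub_one_of_pos hnpos
    linarith
  set Sc := ∑ k ∈ Icc 1 (M + 1), (1 : ℝ) / ((n : ℝ) - 2 * k) with hSc_def
  set Sa := ∑ k ∈ Icc 1 (M + 1), (1 : ℝ) / ((k : ℝ) + 1) with hSa_def
  -- pointwise bound on the summand
  have hpoint : ∀ k ∈ Icc 1 (M + 1),
      ((n : ℝ) - k) / (((k : ℝ) + 1) * ((n : ℝ) - k - 1) ^ 2 * ((n : ℝ) - 2 * k))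
        ≤ (4 / (n : ℝ) ^ 2 + 8 / (n : ℝ) ^ 3) * (1 / ((n : ℝ) - 2 * k))
          + (1 / (n : ℝ) ^ 2 + 4 / (n : ℝ) ^ 3) * (1 / ((k : ℝ) + 1)) := by
    intro k hk
    rw [Finset.mem_Icc] at hk
    have hk1 : 1 ≤ k := hk.1
    have hkn : 2 * k + 2 ≤ n := by omega
    have hk1' : (1 : ℝ) ≤ (k : ℝ) := by exact_mod_cast hk1
    have hkn' : 2 * (k : ℝ) + 2 ≤ (n : ℝ) := by exact_mod_cast hkn
    have key := htb_pointwise ((k : ℝ) + 1) ((n : ℝ) - k - 1) ((n : ℝ) - 2 * k)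
      (by linarith) (by linarith) (by linarith) (by ring)
    have eab : ((k : ℝ) + 1) + ((n : ℝ) - k - 1) = (n : ℝ) := by ring
    rw [eab] at key
    have enum : ((n : ℝ) - k - 1) + 1 = (n : ℝ) - k := by ring
    rw [enum] at key
    exact key
  have hsum : ∑ k ∈ Icc 1 (M + 1),
      ((n : ℝ) - k) / (((k : ℝ) + 1) * ((n : ℝ) - k - 1) ^ 2 * ((n : ℝ) - 2 * k))
        ≤ (4 / (n : ℝ) ^ 2 + 8 / (n : ℝ) ^ 3) * Sc + (1 / (n : ℝ) ^ 2 + 4 / (n : ℝ) ^ 3) * Sa := by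
    calc ∑ k ∈ Icc 1 (M + 1),
        ((n : ℝ) - k) / (((k : ℝ) + 1) * ((n : ℝ) - k - 1) ^ 2 * ((n : ℝ) - 2 * k))
        ≤ ∑ k ∈ Icc 1 (M + 1),
            ((4 / (n : ℝ) ^ 2 + 8 / (n : ℝ) ^ 3) * (1 / ((n : ℝ) - 2 * k))
              + (1 / (n : ℝ) ^ 2 + 4 / (n : ℝ) ^ 3) * (1 / ((k : ℝ) + 1))) :=
          Finset.sum_le_sum hpoint
      _ = (4 / (n : ℝ) ^ 2 + 8 / (n : ℝ) ^ 3) * Sc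
            + (1 / (n : ℝ) ^ 2 + 4 / (n : ℝ) ^ 3) * Sa := by
          rw [Finset.sum_add_distrib, ← Finset.mul_sum, ← Finset.mul_sum]
  -- bound Sa
  have hSa : Sa ≤ L := by
    have h1 := htb_sumA (M + 1)
    have h2 : Real.log (((M + 1 : ℕ) : ℝ) + 1) ≤ L := by
      apply Real.log_le_log (by positivity)
      have : ((M + 1 + 1 : ℕ) : ℝ) ≤ (n : ℝ) := by exact_mod_cast hm3
      push_cast at this ⊢
      linarith
    exact h1.trans h2
  -- bound Sc
  have hSc : Sc ≤ L / 2 + 1 / 2 := by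
    have hM3 : 2 * M + 3 ≤ n := by omega
    rw [hSc_def, Finset.sum_Icc_succ_top (by omega : 1 ≤ M + 1)]
    have htail := htb_sumC n M hM3
    have hlog1 : Real.log ((n : ℝ) - 2) ≤ L := by
      apply Real.log_le_log (by linarith) (by linarith)
    have hlog2 : 0 ≤ Real.log ((n : ℝ) - 2 * M - 2) := by
      apply Real.log_nonneg
      have : ((2 * M + 3 : ℕ) : ℝ) ≤ (n : ℝ) := by exact_mod_cast hM3
      push_cast at this
      linarith
    have hlast : (1 : ℝ) / ((n : ℝ) - 2 * ((M + 1 : ℕ) : ℝ)) ≤ 1 / 2 := by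
      apply one_div_le_one_div_of_le (by norm_num)
      have : ((2 * (M + 1) + 2 : ℕ) : ℝ) ≤ (n : ℝ) := by exact_mod_cast hm2
      push_cast at this ⊢
      linarith
    push_cast at htail hlast ⊢
    linarith
  -- first term bound
  have hT1 : (n : ℝ) ^ 3 / (3 * ((n : ℝ) - 1) ^ 2) ≤ (n : ℝ) := by
    rw [div_le_iff₀ (by nlinarith)]
    nlinarith
  -- combine
  have hmul : ((n : ℝ) ^ 3 / 3) *
      ((4 / (n : ℝ) ^ 2 + 8 / (n : ℝ) ^ 3) * Sc + (1 / (n : ℝ) ^ 2 + 4 / (n : ℝ) ^ 3) * Sa)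
      = (4 * (n : ℝ) / 3 + 8 / 3) * Sc + ((n : ℝ) / 3 + 4 / 3) * Sa := by
    have hn0 : (n : ℝ) ≠ 0 := by positivity
    field_simp
  have hstep : ((n : ℝ) ^ 3 / 3) *
      ∑ k ∈ Finset.Icc 1 (M + 1),
        ((n : ℝ) - k) / (((k : ℝ) + 1) * ((n : ℝ) - k - 1) ^ 2 * ((n : ℝ) - 2 * k))
      ≤ (4 * (n : ℝ) / 3 + 8 / 3) * Sc + ((n : ℝ) / 3 + 4 / 3) * Sa := by
    rw [← hmul]
    exact mul_le_mul_of_nonneg_left hsum (by positivity)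
  have hc1 : (0 : ℝ) ≤ 4 * (n : ℝ) / 3 + 8 / 3 := by linarith
  have hc2 : (0 : ℝ) ≤ (n : ℝ) / 3 + 4 / 3 := by linarith
  have hb1 : (4 * (n : ℝ) / 3 + 8 / 3) * Sc ≤ (4 * (n : ℝ) / 3 + 8 / 3) * (L / 2 + 1 / 2) :=
    mul_le_mul_of_nonneg_left hSc hc1
  have hb2 : ((n : ℝ) / 3 + 4 / 3) * Sa ≤ ((n : ℝ) / 3 + 4 / 3) * L :=
    mul_le_mul_of_nonneg_left hSa hc2
  have hfin : (4 * (n : ℝ) / 3 + 8 / 3) * (L / 2 + 1 / 2) + ((n : ℝ) / 3 + 4 / 3) * L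
      ≤ (n : ℝ) * L + 7 * (n : ℝ) := by nlinarith
  linarith
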